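/- Let X have density c₁·W(x;α₁,β,γ) + c₂·W(x;α₂,β,γ) and Y have density c₁'·W(y;a₁,β,γ) + c₂'·W(y;a₂,β,γ), where W(·;α,β,γ) denotes the Weibull density, c₁+c₂ = 1, c₁'+c₂' = 1, all weights in [0,1], all scale parameters positive, the same β and γ > 0, and X, Y independent. Then P(X > Y) = Σ_{i=1}^2 Σ_{j=1}^2 c_i c_j' · α_i^γ / (α_i^γ + a_j^γ). -/

import Mathlib

open MeasureTheory ProbabilityTheory Real

noncomputable def weibullPDF (α β γ x : ℝ) : ℝ :=
  if β ≤ x then (γ / α) * ((x - β) / α) ^ (γ - 1) * Real.exp (-((x - β) / α) ^ γ) else 0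

noncomputable def weibullCDF (a β γ x : ℝ) : ℝ :=
  if β ≤ x then 1 - Real.exp (-((x - β) / a) ^ γ) else 0

open Set Filter Topology

section aux

variable {α a c β γ : ℝ}

lemma measurable_weibullPDF (α β γ : ℝ) : Measurable (weibullPDF α β γ) := by
  unfold weibullPDF
  exact Measurable.ite (measurableSet_le measurable_const measurable_id) (by fun_prop)
    measurable_const

lemma measurable_weibullCDF (a β γ : ℝ) : Measurable (weibullCDF a β γ) := by
  unfold weibullCDF
  exact Measurable.ite (measurableSet_le measurable_const measurable_id) (by fun_prop)
    measurable_const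

lemma weibullPDF_nonneg (hα : 0 < α) (hγ : 0 < γ) (β x : ℝ) : 0 ≤ weibullPDF α β γ x := by
  unfold weibullPDF
  split_ifs with h
  · have h0 : (0:ℝ) ≤ (x - β) / α := div_nonneg (by linarith) hα.le
    exact mul_nonneg (mul_nonneg (by positivity) (Real.rpow_nonneg h0 _)) (Real.exp_pos _).le
  · exact le_refl 0

lemma weibullCDF_nonneg (ha : 0 < a) (β γ x : ℝ) : 0 ≤ weibullCDF a β γ x := by
  unfold weibullCDF
  split_ifs with h
  · have h1 : Real.exp (-((x - β) / a) ^ γ) ≤ 1 := by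
      rw [Real.exp_le_one_iff, neg_nonpos]
      exact Real.rpow_nonneg (div_nonneg (by linarith) ha.le) γ
    linarith
  · exact le_refl 0

lemma weibullCDF_of_le (hγ : 0 < γ) {x : ℝ} (hx : x ≤ β) : weibullCDF a β γ x = 0 := by
  unfold weibullCDF
  split_ifs with h
  · have hxβ : x = β := le_antisymm hx h
    simp [hxβ, Real.zero_rpow hγ.ne']
  · rfl

lemma continuous_shape (β c : ℝ) (hγ : 0 < γ) : Continuous fun x : ℝ => ((x - β) / c) ^ γ := by
  rw [continuous_iff_continuousAt]
  intro x
  exact (Real.continuousAt_rpow_const _ _ (Or.inr hγ.le)).comp (by fun_prop)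

lemma tendsto_shape (hc : 0 < c) (hγ : 0 < γ) (β : ℝ) :
    Tendsto (fun x : ℝ => ((x - β) / c) ^ γ) atTop atTop := by
  apply (tendsto_rpow_atTop hγ).comp
  apply Tendsto.atTop_div_const hc
  simpa [sub_eq_add_neg] using tendsto_atTop_add_const_right atTop (-β) tendsto_id

lemma tendsto_exp_shape (hc : 0 < c) (hγ : 0 < γ) (β : ℝ) {k : ℝ} (hk : 0 < k) :
    Tendsto (fun x : ℝ => Real.exp (-(k * ((x - β) / c) ^ γ))) atTop (𝓝 0) := by
  apply Real.tendsto_exp_atBot.comp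
  apply tendsto_neg_atTop_atBot.comp
  exact (tendsto_shape hc hγ β).const_mul_atTop hk

lemma hasDerivAt_shape (hc : 0 < c) (β γ : ℝ) {x : ℝ} (hx : β < x) :
    HasDerivAt (fun y : ℝ => ((y - β) / c) ^ γ) (γ * ((x - β) / c) ^ (γ - 1) / c) x := by
  have h1 : HasDerivAt (fun y : ℝ => (y - β) / c) (1 / c) x := by
    simpa using ((hasDerivAt_id x).sub_const β).div_const c
  have hne : (x - β) / c ≠ 0 := ne_of_gt (div_pos (sub_pos.2 hx) hc)
  have h2 := Real.hasDerivAt_rpow_const (x := (x - β) / c) (p := γ) (Or.inl hne)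
  have h3 := h2.comp x h1
  simpa [mul_one_div, Function.comp_def, div_eq_mul_inv] using h3

lemma hasDerivAt_primitive (hα : 0 < α) (hγ : 0 < γ) {x : ℝ} (hx : β < x) :
    HasDerivAt (fun y : ℝ => -Real.exp (-((y - β) / α) ^ γ)) (weibullPDF α β γ x) x := by
  have hu := hasDerivAt_shape hα β γ hx
  have h := ((hu.neg).exp).neg
  rw [weibullPDF, if_pos hx.le]
  refine h.congr_deriv (Eq.symm ?_)
  simp only [Pi.neg_apply]
  ring

lemma integrableOn_weibullPDF (hα : 0 < α) (hγ : 0 < γ) (β : ℝ) :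
    IntegrableOn (weibullPDF α β γ) (Ioi β) := by
  apply integrableOn_Ioi_deriv_of_nonneg (l := 0)
  · exact ((Real.continuous_exp.comp (continuous_shape β α hγ).neg).neg).continuousWithinAt
  · exact fun x hx => hasDerivAt_primitive hα hγ hx
  · exact fun x _ => weibullPDF_nonneg hα hγ β x
  · have := (tendsto_exp_shape hα hγ β one_pos).neg
    exact (by simpa using this : Tendsto (fun x : ℝ => -Real.exp (-((x - β) / α) ^ γ)) atTop (𝓝 0))

lemma weibull_key (hα : 0 < α) (ha : 0 < a) (hγ : 0 < γ) (β : ℝ) :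
    IntegrableOn (fun x => weibullPDF α β γ x * (1 - Real.exp (-((x - β) / a) ^ γ))) (Ioi β) ∧
      ∫ x in Ioi β, weibullPDF α β γ x * (1 - Real.exp (-((x - β) / a) ^ γ)) =
        α ^ γ / (α ^ γ + a ^ γ) := by
  set r : ℝ := (α / a) ^ γ with hrdef
  have hr : 0 < r := Real.rpow_pos_of_pos (div_pos hα ha) γ
  have h1r : (1 : ℝ) + r ≠ 0 := by positivity
  set g : ℝ → ℝ := fun x =>
    -Real.exp (-((x - β) / α) ^ γ) +
      (1 / (1 + r)) * Real.exp (-((1 + r) * ((x - β) / α) ^ γ)) with hg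
  have hcont : ContinuousWithinAt g (Ici β) β := by
    apply Continuous.continuousWithinAt
    have h1 := continuous_shape β α hγ
    exact ((Real.continuous_exp.comp h1.neg).neg).add
      (continuous_const.mul (Real.continuous_exp.comp (continuous_const.mul h1).neg))
  have hkey : ∀ x ∈ Ioi β, ((x - β) / a) ^ γ = r * ((x - β) / α) ^ γ := by
    intro x hx
    rw [mem_Ioi] at hx
    rw [hrdef, ← Real.mul_rpow (by positivity) (div_nonneg (by linarith) hα.le)]
    congr 1
    field_simp
  have hderiv : ∀ x ∈ Ioi β, HasDerivAt g
      (weibullPDF α β γ x * (1 - Real.exp (-((x - β) / a) ^ γ))) x := by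
    intro x hx
    have hx' : β < x := hx
    have hu := hasDerivAt_shape hα β γ hx'
    have hd1 := ((hu.neg).exp).neg
    have hd2 := (((hu.const_mul (1 + r)).neg).exp).const_mul (1 / (1 + r))
    have h3 := hd1.add hd2
    rw [hg]
    refine h3.congr_deriv (Eq.symm ?_)
    rw [weibullPDF, if_pos hx'.le, hkey x hx]
    have hexp : Real.exp (-((1 + r) * ((x - β) / α) ^ γ))
        = Real.exp (-((x - β) / α) ^ γ) * Real.exp (-(r * ((x - β) / α) ^ γ)) := by
      rw [← Real.exp_add]; ring_nf
    simp only [Pi.neg_apply]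
    rw [hexp]
    field_simp
    ring
  have hpos : ∀ x ∈ Ioi β, 0 ≤ weibullPDF α β γ x * (1 - Real.exp (-((x - β) / a) ^ γ)) := by
    intro x hx
    rw [mem_Ioi] at hx
    apply mul_nonneg (weibullPDF_nonneg hα hγ β x)
    have h1 : Real.exp (-((x - β) / a) ^ γ) ≤ 1 := by
      rw [Real.exp_le_one_iff, neg_nonpos]
      exact Real.rpow_nonneg (div_nonneg (by linarith) ha.le) γ
    linarith
  have htend : Tendsto g atTop (𝓝 0) := by
    have h1 := (tendsto_exp_shape hα hγ β one_pos).neg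
    have h2 := (tendsto_exp_shape hα hγ β (k := 1 + r) (by positivity)).const_mul (1 / (1 + r))
    have h3 := h1.add h2
    rw [hg]
    simpa using h3
  have hint := integrableOn_Ioi_deriv_of_nonneg hcont hderiv hpos htend
  have heq := integral_Ioi_of_hasDerivAt_of_nonneg hcont hderiv hpos htend
  refine ⟨hint, ?_⟩
  rw [heq, hg]
  have h0 : ((β - β) / α) ^ γ = 0 := by
    rw [sub_self, zero_div, Real.zero_rpow hγ.ne']
  simp only [h0, mul_zero, neg_zero, Real.exp_zero, mul_one]
  have hreq : r = α ^ γ / a ^ γ := Real.div_rpow hα.le ha.le γ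
  have hαγ : (0:ℝ) < α ^ γ := Real.rpow_pos_of_pos hα γ
  have haγ : (0:ℝ) < a ^ γ := Real.rpow_pos_of_pos ha γ
  have hstep : (0:ℝ) - (-1 + 1 / (1 + r)) = r / (1 + r) := by
    field_simp
    ring
  rw [hstep, hreq]
  generalize α ^ γ = A at hαγ ⊢
  generalize a ^ γ = B at haγ ⊢
  have hB : B ≠ 0 := haγ.ne'
  have hAB : A + B ≠ 0 := by positivity
  have h1B : 1 + A / B ≠ 0 := by positivity
  field_simp
  all_goals exact add_comm A B

lemma weibull_lintegral_cdf (ha : 0 < a) (hγ : 0 < γ) (β x : ℝ) :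
    ∫⁻ y in Iio x, ENNReal.ofReal (weibullPDF a β γ y) =
      ENNReal.ofReal (weibullCDF a β γ x) := by
  by_cases hx : β ≤ x
  · have hzero : ∫⁻ y in Iio β, ENNReal.ofReal (weibullPDF a β γ y) = 0 := by
      have hae : ∀ᵐ y ∂(volume : Measure ℝ), y ∈ Iio β →
          ENNReal.ofReal (weibullPDF a β γ y) = 0 := by
        refine ae_of_all _ fun y hy => ?_
        rw [weibullPDF, if_neg (not_le.2 hy), ENNReal.ofReal_zero]
      rw [setLIntegral_congr_fun_ae measurableSet_Iio hae, lintegral_zero]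
    have hIoc : IntegrableOn (weibullPDF a β γ) (Ioc β x) :=
      (integrableOn_weibullPDF ha hγ β).mono_set Ioc_subset_Ioi_self
    have hIco : IntegrableOn (weibullPDF a β γ) (Ico β x) := by
      rw [IntegrableOn, Measure.restrict_congr_set Ico_ae_eq_Ioc]
      exact hIoc
    have hdisj : Disjoint (Iio β) (Ico β x) :=
      Set.disjoint_left.2 fun y hy hy2 => absurd hy2.1 (not_le.2 hy)
    rw [show Iio x = Iio β ∪ Ico β x from (Iio_union_Ico_eq_Iio hx).symm,
      lintegral_union measurableSet_Ico hdisj, hzero, zero_add,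
      ← ofReal_integral_eq_lintegral_ofReal hIco
        (ae_of_all _ fun y => weibullPDF_nonneg ha hγ β y)]
    congr 1
    have hcont : ContinuousOn (fun y : ℝ => -Real.exp (-((y - β) / a) ^ γ)) (Icc β x) :=
      ((Real.continuous_exp.comp (continuous_shape β a hγ).neg).neg).continuousOn
    have hderiv : ∀ y ∈ Ioo β x,
        HasDerivWithinAt (fun y : ℝ => -Real.exp (-((y - β) / a) ^ γ))
          (weibullPDF a β γ y) (Ioi y) y :=
      fun y hy => (hasDerivAt_primitive ha hγ hy.1).hasDerivWithinAt
    have hii : IntervalIntegrable (weibullPDF a β γ) volume β x :=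
      (intervalIntegrable_iff_integrableOn_Ioc_of_le hx).2 hIoc
    rw [setIntegral_congr_set Ico_ae_eq_Ioc, ← intervalIntegral.integral_of_le hx,
      intervalIntegral.integral_eq_sub_of_hasDeriv_right_of_le hx hcont hderiv hii,
      weibullCDF, if_pos hx]
    simp only [sub_self, zero_div, Real.zero_rpow hγ.ne', neg_zero, Real.exp_zero]
    ring
  · rw [weibullCDF, if_neg hx, ENNReal.ofReal_zero]
    have hae : ∀ᵐ y ∂(volume : Measure ℝ), y ∈ Iio x →
        ENNReal.ofReal (weibullPDF a β γ y) = 0 := by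
      refine ae_of_all _ fun y hy => ?_
      rw [weibullPDF, if_neg (by push_neg at hx ⊢; linarith [mem_Iio.1 hy]), ENNReal.ofReal_zero]
    rw [setLIntegral_congr_fun_ae measurableSet_Iio hae, lintegral_zero]

lemma mixture_lintegral_cdf {a₁ a₂ c₁' c₂' : ℝ} (ha₁ : 0 < a₁) (ha₂ : 0 < a₂) (hγ : 0 < γ)
    (hc₁' : 0 ≤ c₁') (hc₂' : 0 ≤ c₂') (β x : ℝ) :
    ∫⁻ y in Iio x, ENNReal.ofReal (c₁' * weibullPDF a₁ β γ y + c₂' * weibullPDF a₂ β γ y) =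
      ENNReal.ofReal (c₁' * weibullCDF a₁ β γ x + c₂' * weibullCDF a₂ β γ x) := by
  have hm1 : Measurable fun y => ENNReal.ofReal (weibullPDF a₁ β γ y) :=
    (measurable_weibullPDF a₁ β γ).ennreal_ofReal
  have hm2 : Measurable fun y => ENNReal.ofReal (weibullPDF a₂ β γ y) :=
    (measurable_weibullPDF a₂ β γ).ennreal_ofReal
  calc ∫⁻ y in Iio x, ENNReal.ofReal (c₁' * weibullPDF a₁ β γ y + c₂' * weibullPDF a₂ β γ y)
      = ∫⁻ y in Iio x, (ENNReal.ofReal c₁' * ENNReal.ofReal (weibullPDF a₁ β γ y) +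
          ENNReal.ofReal c₂' * ENNReal.ofReal (weibullPDF a₂ β γ y)) := by
        apply lintegral_congr
        intro y
        rw [ENNReal.ofReal_add (mul_nonneg hc₁' (weibullPDF_nonneg ha₁ hγ β y))
          (mul_nonneg hc₂' (weibullPDF_nonneg ha₂ hγ β y)),
          ENNReal.ofReal_mul hc₁', ENNReal.ofReal_mul hc₂']
    _ = ENNReal.ofReal c₁' * (∫⁻ y in Iio x, ENNReal.ofReal (weibullPDF a₁ β γ y)) +
          ENNReal.ofReal c₂' * (∫⁻ y in Iio x, ENNReal.ofReal (weibullPDF a₂ β γ y)) := by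
        rw [lintegral_add_left (hm1.const_mul _), lintegral_const_mul _ hm1,
          lintegral_const_mul _ hm2]
    _ = ENNReal.ofReal (c₁' * weibullCDF a₁ β γ x + c₂' * weibullCDF a₂ β γ x) := by
        rw [weibull_lintegral_cdf ha₁ hγ, weibull_lintegral_cdf ha₂ hγ,
          ← ENNReal.ofReal_mul hc₁', ← ENNReal.ofReal_mul hc₂',
          ← ENNReal.ofReal_add (mul_nonneg hc₁' (weibullCDF_nonneg ha₁ β γ x))
            (mul_nonneg hc₂' (weibullCDF_nonneg ha₂ β γ x))]

end aux

theorem pythagorean_mixture_weibull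
    {Ω : Type*} [MeasureSpace Ω] [IsProbabilityMeasure (ℙ : Measure Ω)]
    (α₁ α₂ a₁ a₂ β γ c₁ c₂ c₁' c₂' : ℝ)
    (hα₁ : 0 < α₁) (hα₂ : 0 < α₂) (ha₁ : 0 < a₁) (ha₂ : 0 < a₂) (hγ : 0 < γ)
    (hc₁ : 0 ≤ c₁) (hc₁1 : c₁ ≤ 1) (hc₂ : 0 ≤ c₂) (hc₂1 : c₂ ≤ 1)
    (hc₁' : 0 ≤ c₁') (hc₁'1 : c₁' ≤ 1) (hc₂' : 0 ≤ c₂') (hc₂'1 : c₂' ≤ 1)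
    (hsum : c₁ + c₂ = 1) (hsum' : c₁' + c₂' = 1)
    (X Y : Ω → ℝ) (hX : Measurable X) (hY : Measurable Y)
    (hXd : Measure.map X ℙ = volume.withDensity (fun x =>
      ENNReal.ofReal (c₁ * weibullPDF α₁ β γ x + c₂ * weibullPDF α₂ β γ x)))
    (hYd : Measure.map Y ℙ = volume.withDensity (fun y =>
      ENNReal.ofReal (c₁' * weibullPDF a₁ β γ y + c₂' * weibullPDF a₂ β γ y)))
    (hind : IndepFun X Y ℙ) :
    ℙ {ω | X ω > Y ω} = ENNReal.ofReal
      (c₁ * c₁' * (α₁ ^ γ / (α₁ ^ γ + a₁ ^ γ)) +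
       c₁ * c₂' * (α₁ ^ γ / (α₁ ^ γ + a₂ ^ γ)) +
       c₂ * c₁' * (α₂ ^ γ / (α₂ ^ γ + a₁ ^ γ)) +
       c₂ * c₂' * (α₂ ^ γ / (α₂ ^ γ + a₂ ^ γ))) := by
  haveI hPX : IsProbabilityMeasure (Measure.map X ℙ) := Measure.isProbabilityMeasure_map hX.aemeasurable
  haveI hPY : IsProbabilityMeasure (Measure.map Y ℙ) := Measure.isProbabilityMeasure_map hY.aemeasurable
  have hset : MeasurableSet {p : ℝ × ℝ | p.2 < p.1} :=
    measurableSet_lt measurable_snd measurable_fst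
  have hmap := (indepFun_iff_map_prod_eq_prod_map_map hX.aemeasurable hY.aemeasurable).mp hind
  have h1 : ℙ {ω | X ω > Y ω} = ∫⁻ x, (Measure.map Y ℙ) (Set.Iio x) ∂(Measure.map X ℙ) := by
    have hpre : {ω | X ω > Y ω} = (fun ω => (X ω, Y ω)) ⁻¹' {p : ℝ × ℝ | p.2 < p.1} := rfl
    rw [hpre, ← Measure.map_apply (hX.prodMk hY) hset, hmap, Measure.prod_apply hset]
    rfl
  have hcdf : ∀ x : ℝ, (Measure.map Y ℙ) (Set.Iio x) =
      ENNReal.ofReal (c₁' * weibullCDF a₁ β γ x + c₂' * weibullCDF a₂ β γ x) := by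
    intro x
    rw [hYd, withDensity_apply _ measurableSet_Iio,
      mixture_lintegral_cdf ha₁ ha₂ hγ hc₁' hc₂' β x]
  have hfmeas : Measurable fun x =>
      ENNReal.ofReal (c₁ * weibullPDF α₁ β γ x + c₂ * weibullPDF α₂ β γ x) :=
    (((measurable_weibullPDF α₁ β γ).const_mul c₁).add
      ((measurable_weibullPDF α₂ β γ).const_mul c₂)).ennreal_ofReal
  have hGmeas : Measurable fun x =>
      ENNReal.ofReal (c₁' * weibullCDF a₁ β γ x + c₂' * weibullCDF a₂ β γ x) :=
    (((measurable_weibullCDF a₁ β γ).const_mul c₁').add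
      ((measurable_weibullCDF a₂ β γ).const_mul c₂')).ennreal_ofReal
  rw [h1]
  simp_rw [hcdf]
  rw [hXd, lintegral_withDensity_eq_lintegral_mul _ hfmeas hGmeas]
  set H : ℝ → ℝ := fun x =>
    (c₁ * weibullPDF α₁ β γ x + c₂ * weibullPDF α₂ β γ x) *
      (c₁' * weibullCDF a₁ β γ x + c₂' * weibullCDF a₂ β γ x) with hH
  have hfnn : ∀ x : ℝ, 0 ≤ c₁ * weibullPDF α₁ β γ x + c₂ * weibullPDF α₂ β γ x := fun x =>
    add_nonneg (mul_nonneg hc₁ (weibullPDF_nonneg hα₁ hγ β x))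
      (mul_nonneg hc₂ (weibullPDF_nonneg hα₂ hγ β x))
  have hGnn : ∀ x : ℝ, 0 ≤ c₁' * weibullCDF a₁ β γ x + c₂' * weibullCDF a₂ β γ x := fun x =>
    add_nonneg (mul_nonneg hc₁' (weibullCDF_nonneg ha₁ β γ x))
      (mul_nonneg hc₂' (weibullCDF_nonneg ha₂ β γ x))
  have h2 : ∫⁻ x, ((fun x =>
        ENNReal.ofReal (c₁ * weibullPDF α₁ β γ x + c₂ * weibullPDF α₂ β γ x)) *
      fun x => ENNReal.ofReal (c₁' * weibullCDF a₁ β γ x + c₂' * weibullCDF a₂ β γ x)) x =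
      ∫⁻ x, ENNReal.ofReal (H x) := by
    apply lintegral_congr
    intro x
    rw [Pi.mul_apply, ← ENNReal.ofReal_mul (hfnn x)]
  rw [h2]
  have hcompl : ∫⁻ x in (Set.Ioi β)ᶜ, ENNReal.ofReal (H x) = 0 := by
    have hae : ∀ᵐ x ∂(volume : Measure ℝ), x ∈ (Set.Ioi β)ᶜ →
        ENNReal.ofReal (H x) = 0 := by
      refine ae_of_all _ fun x hx => ?_
      have hxβ : x ≤ β := by simpa using hx
      rw [hH]
      simp only [weibullCDF_of_le hγ hxβ, mul_zero, add_zero, mul_zero, ENNReal.ofReal_zero]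
    rw [setLIntegral_congr_fun_ae measurableSet_Ioi.compl hae, lintegral_zero]
  rw [← lintegral_add_compl (fun x => ENNReal.ofReal (H x)) measurableSet_Ioi, hcompl, add_zero]
  have hk11 := weibull_key hα₁ ha₁ hγ β
  have hk12 := weibull_key hα₁ ha₂ hγ β
  have hk21 := weibull_key hα₂ ha₁ hγ β
  have hk22 := weibull_key hα₂ ha₂ hγ β
  have hHeqOn : Set.EqOn H (fun x =>
      c₁ * c₁' * (weibullPDF α₁ β γ x * (1 - Real.exp (-((x - β) / a₁) ^ γ))) +
      c₁ * c₂' * (weibullPDF α₁ β γ x * (1 - Real.exp (-((x - β) / a₂) ^ γ))) +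
      c₂ * c₁' * (weibullPDF α₂ β γ x * (1 - Real.exp (-((x - β) / a₁) ^ γ))) +
      c₂ * c₂' * (weibullPDF α₂ β γ x * (1 - Real.exp (-((x - β) / a₂) ^ γ)))) (Set.Ioi β) := by
    intro x hx
    have hxβ : β ≤ x := (Set.mem_Ioi.1 hx).le
    rw [hH]
    simp only [weibullCDF, if_pos hxβ]
    ring
  have hHint : IntegrableOn H (Set.Ioi β) := by
    apply IntegrableOn.congr_fun _ hHeqOn.symm measurableSet_Ioi
    exact (((hk11.1.const_mul _).add (hk12.1.const_mul _)).add (hk21.1.const_mul _)).add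
      (hk22.1.const_mul _)
  have hHnn : 0 ≤ᵐ[volume.restrict (Set.Ioi β)] H :=
    ae_of_all _ fun x => mul_nonneg (hfnn x) (hGnn x)
  rw [← ofReal_integral_eq_lintegral_ofReal hHint hHnn]
  congr 1
  rw [setIntegral_congr_fun measurableSet_Ioi hHeqOn]
  have h11 : Integrable (fun x =>
      c₁ * c₁' * (weibullPDF α₁ β γ x * (1 - Real.exp (-((x - β) / a₁) ^ γ))))
      (volume.restrict (Set.Ioi β)) := hk11.1.const_mul _
  have h12 : Integrable (fun x =>
      c₁ * c₂' * (weibullPDF α₁ β γ x * (1 - Real.exp (-((x - β) / a₂) ^ γ))))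
      (volume.restrict (Set.Ioi β)) := hk12.1.const_mul _
  have h21 : Integrable (fun x =>
      c₂ * c₁' * (weibullPDF α₂ β γ x * (1 - Real.exp (-((x - β) / a₁) ^ γ))))
      (volume.restrict (Set.Ioi β)) := hk21.1.const_mul _
  have h22 : Integrable (fun x =>
      c₂ * c₂' * (weibullPDF α₂ β γ x * (1 - Real.exp (-((x - β) / a₂) ^ γ))))
      (volume.restrict (Set.Ioi β)) := hk22.1.const_mul _
  have hA : Integrable (fun x =>
      c₁ * c₁' * (weibullPDF α₁ β γ x * (1 - Real.exp (-((x - β) / a₁) ^ γ))) +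
      c₁ * c₂' * (weibullPDF α₁ β γ x * (1 - Real.exp (-((x - β) / a₂) ^ γ))))
      (volume.restrict (Set.Ioi β)) := h11.add h12
  have hB : Integrable (fun x =>
      c₁ * c₁' * (weibullPDF α₁ β γ x * (1 - Real.exp (-((x - β) / a₁) ^ γ))) +
      c₁ * c₂' * (weibullPDF α₁ β γ x * (1 - Real.exp (-((x - β) / a₂) ^ γ))) +
      c₂ * c₁' * (weibullPDF α₂ β γ x * (1 - Real.exp (-((x - β) / a₁) ^ γ))))
      (volume.restrict (Set.Ioi β)) := hA.add h21
  rw [integral_add hB h22, integral_add hA h21, integral_add h11 h12,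
    MeasureTheory.integral_const_mul, MeasureTheory.integral_const_mul,
    MeasureTheory.integral_const_mul, MeasureTheory.integral_const_mul,
    hk11.2, hk12.2, hk21.2, hk22.2]
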